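/- arXiv:math-ph/0002027 — 2 statements merged into one kernel-verified Lean document; each statement's English description precedes it below -/
import Mathlib

section
/- Let k be an even positive integer and let x_1,...,x_k be distinct real (or complex) numbers. Let M be the k×k matrix with M_{ii}=0 and M_{ij}=1/(x_j-x_i) for i≠j. Then det(M) equals the sum over all (k-1)!! perfect pairings {{σ(1),σ(2)},...,{σ(k-1),σ(k)}} of {1,...,k} of the product 1/((x_{σ(1)}-x_{σ(2)})^2 ··· (x_{σ(k-1)}-x_{σ(k)})^2). -/
open Finset

/-- A perfect pairing of `Fin k` is a fixed-point-free involution. -/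
def IsPerfectPairing {k : ℕ} (σ : Equiv.Perm (Fin k)) : Prop :=
  (∀ i, σ (σ i) = i) ∧ ∀ i, σ i ≠ i

instance {k : ℕ} (σ : Equiv.Perm (Fin k)) : Decidable (IsPerfectPairing σ) := by
  unfold IsPerfectPairing; infer_instance

open Equiv

namespace Kenyon3

variable {k : ℕ}

noncomputable def Pf (x : Fin k → ℂ) (S : Finset (Fin k)) : ℂ :=
  ∑ σ ∈ Finset.univ.filter (fun σ : Perm (Fin k) => σ.support = S),
    ((Perm.sign σ : ℤ) : ℂ) * ∏ i ∈ S, (x i - x (σ i))⁻¹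

noncomputable def Rf (x : Fin k → ℂ) (S : Finset (Fin k)) : ℂ :=
  ∑ σ ∈ Finset.univ.filter (fun σ : Perm (Fin k) => σ.support = S ∧ σ * σ = 1),
    ∏ i ∈ S.filter (fun i => i < σ i), ((x i - x (σ i)) ^ 2)⁻¹

lemma fix_of_support {τ : Perm (Fin k)} {S : Finset (Fin k)} {a : Fin k}
    (hτ : τ.support = S) (ha : a ∉ S) : τ a = a :=
  Perm.notMem_support.mp (by rw [hτ]; exact ha)

lemma Perm.apply_inv_self (σ : Perm (Fin k)) (a : Fin k) : σ (σ⁻¹ a) = a :=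
  σ.apply_symm_apply a

lemma inv_mul_inv_eq {u v : ℂ} (hu : u ≠ 0) (hv : v ≠ 0) (huv : u + v ≠ 0) :
    u⁻¹ * v⁻¹ = (u + v)⁻¹ * (u⁻¹ + v⁻¹) := by
  field_simp
  ring

lemma inv_mul_neg_inv {u : ℂ} : u⁻¹ * (-u)⁻¹ = -((u ^ 2)⁻¹) := by
  rw [inv_neg, pow_two, mul_inv]; ring

/-- support of `swap a b * τ` when `τ` has support `S \ {a,b}`. -/
lemma support_swap_mul {S : Finset (Fin k)} {a b : Fin k} (ha : a ∈ S) (hb : b ∈ S)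
    (hab : a ≠ b) {τ : Perm (Fin k)} (hτ : τ.support = (S.erase a).erase b) :
    (swap a b * τ).support = S := by
  have hτa : τ a = a := fix_of_support hτ (by simp)
  have hτb : τ b = b := fix_of_support hτ (by simp)
  ext i
  simp only [Perm.mem_support, Perm.mul_apply]
  by_cases hia : i = a
  · subst hia; rw [hτa, swap_apply_left]
    simp [hab.symm, ha]
  by_cases hib : i = b
  · subst hib; rw [hτb, swap_apply_right]
    simp [hab, hb]
  · have h1 : τ i ≠ a := fun h => hia (τ.injective (h.trans hτa.symm))
    have h2 : τ i ≠ b := fun h => hib (τ.injective (h.trans hτb.symm))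
    rw [swap_apply_of_ne_of_ne h1 h2]
    constructor
    · intro h
      have : i ∈ τ.support := Perm.mem_support.mpr h
      rw [hτ] at this
      exact Finset.mem_of_mem_erase (Finset.mem_of_mem_erase this)
    · intro h
      have : i ∈ τ.support := by
        rw [hτ]; exact Finset.mem_erase.mpr ⟨hib, Finset.mem_erase.mpr ⟨hia, h⟩⟩
      exact Perm.mem_support.mp this

lemma support_swap_mul' {S : Finset (Fin k)} {a b : Fin k} (hab : a ≠ b)
    {σ : Perm (Fin k)} (hσ : σ.support = S) (hσa : σ a = b) (hσb : σ b = a) :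
    (swap a b * σ).support = (S.erase a).erase b := by
  ext i
  simp only [Perm.mem_support, Perm.mul_apply, Finset.mem_erase]
  by_cases hia : i = a
  · subst hia; rw [hσa, swap_apply_right]
    simp [hab]
  by_cases hib : i = b
  · subst hib; rw [hσb, swap_apply_left]
    simp
  · have h1 : σ i ≠ a := fun h => hib (σ.injective (h.trans hσb.symm))
    have h2 : σ i ≠ b := fun h => hia (σ.injective (h.trans hσa.symm))
    rw [swap_apply_of_ne_of_ne h1 h2]
    constructor
    · intro h
      exact ⟨hib, hia, by rw [← hσ]; exact Perm.mem_support.mpr h⟩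
    · rintro ⟨-, -, h⟩
      rw [← hσ] at h
      exact Perm.mem_support.mp h

/-- support of `σ * swap p a` when `σ p = a` and `σ a ≠ p`: removes `a`. -/
lemma support_mul_swap {S : Finset (Fin k)} {a p : Fin k} (hpa : p ≠ a)
    {σ : Perm (Fin k)} (hσ : σ.support = S) (hσp : σ p = a) (hn : σ a ≠ p) :
    (σ * swap p a).support = S.erase a := by
  have hpS : p ∈ S := by
    rw [← hσ]; exact Perm.mem_support.mpr (by rw [hσp]; exact fun h => hpa h.symm)
  ext i
  simp only [Perm.mem_support, Perm.mul_apply, Finset.mem_erase]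
  by_cases hia : i = a
  · subst hia; rw [swap_apply_right, hσp]
    simp
  by_cases hip : i = p
  · subst hip; rw [swap_apply_left]
    simp [hn, hpa, hpS]
  · rw [swap_apply_of_ne_of_ne hip hia]
    rw [← hσ]
    simp [Perm.mem_support, hia]

lemma support_mul_swap' {S : Finset (Fin k)} {a p : Fin k} (haS : a ∈ S)
    (hp : p ∈ S.erase a) {τ : Perm (Fin k)} (hτ : τ.support = S.erase a) :
    (τ * swap p a).support = S := by
  have hpa : p ≠ a := (Finset.mem_erase.mp hp).1
  have hτa : τ a = a := fix_of_support hτ (by simp)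
  have hpsupp : p ∈ τ.support := by rw [hτ]; exact hp
  have hτp : τ p ∈ S.erase a := by rw [← hτ]; exact Perm.apply_mem_support.mpr hpsupp
  ext i
  simp only [Perm.mem_support, Perm.mul_apply]
  by_cases hia : i = a
  · subst hia; rw [swap_apply_right]
    have hne : τ p ≠ i := (Finset.mem_erase.mp hτp).1
    simp [hne, haS]
  by_cases hip : i = p
  · subst hip; rw [swap_apply_left, hτa]
    simp [hpa, Ne.symm hpa, Finset.mem_of_mem_erase hp]
  · rw [swap_apply_of_ne_of_ne hip hia]
    have : (τ i ≠ i) ↔ i ∈ S.erase a := by rw [← hτ, Perm.mem_support]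
    rw [this]
    simp [Finset.mem_erase, hia]

lemma invol_iff {a b : Fin k} (hab : a ≠ b) {τ : Perm (Fin k)}
    (hτa : τ a = a) (hτb : τ b = b) :
    (swap a b * τ) * (swap a b * τ) = 1 ↔ τ * τ = 1 := by
  have hc : swap a b * τ = τ * swap a b := by
    ext i
    simp only [Perm.mul_apply]
    by_cases hia : i = a
    · subst hia; rw [hτa, swap_apply_left, hτb]
    by_cases hib : i = b
    · subst hib; rw [hτb, swap_apply_right, hτa]
    · have h1 : τ i ≠ a := fun h => hia (τ.injective (h.trans hτa.symm))
      have h2 : τ i ≠ b := fun h => hib (τ.injective (h.trans hτb.symm))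
      rw [swap_apply_of_ne_of_ne hia hib, swap_apply_of_ne_of_ne h1 h2]
  have key : (swap a b * τ) * (swap a b * τ) = τ * τ := by
    calc (swap a b * τ) * (swap a b * τ) = swap a b * (τ * swap a b) * τ := by
          group
      _ = swap a b * (swap a b * τ) * τ := by rw [hc]
      _ = τ * τ := by rw [← mul_assoc, swap_mul_self, one_mul]
  rw [key]


lemma Pstep (x : Fin k → ℂ) (hx : Function.Injective x) (S : Finset (Fin k))
    (a : Fin k) (ha : a ∈ S) :
    Pf x S = ∑ b ∈ S.erase a, ((x a - x b) ^ 2)⁻¹ * Pf x ((S.erase a).erase b) := by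
  classical
  have split := Finset.sum_filter_add_sum_filter_not
    (Finset.univ.filter (fun σ : Perm (Fin k) => σ.support = S))
    (fun σ => σ (σ a) = a)
    (fun σ => ((Perm.sign σ : ℤ) : ℂ) * ∏ i ∈ S, (x i - x (σ i))⁻¹)
  rw [Pf, ← split, Finset.filter_filter, Finset.filter_filter]
  have hB : (∑ σ ∈ Finset.univ.filter
        (fun σ : Perm (Fin k) => σ.support = S ∧ ¬σ (σ a) = a),
      ((Perm.sign σ : ℤ) : ℂ) * ∏ i ∈ S, (x i - x (σ i))⁻¹) = 0 := by
    have key : (∑ σ ∈ Finset.univ.filter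
          (fun σ : Perm (Fin k) => σ.support = S ∧ ¬σ (σ a) = a),
        ((Perm.sign σ : ℤ) : ℂ) * ∏ i ∈ S, (x i - x (σ i))⁻¹)
        = ∑ q ∈ (Finset.univ.filter
            (fun τ : Perm (Fin k) => τ.support = S.erase a)) ×ˢ (S.erase a),
          ((Perm.sign q.1 : ℤ) : ℂ) *
            -(((x q.2 - x a)⁻¹ + (x a - x (q.1 q.2))⁻¹) *
              ∏ i ∈ S.erase a, (x i - x (q.1 i))⁻¹) := by
      refine Finset.sum_nbij' (fun σ => (σ * swap (σ⁻¹ a) a, σ⁻¹ a))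
        (fun q => q.1 * swap q.2 a) ?_ ?_ ?_ ?_ ?_
      · intro σ hσ
        simp only [Finset.mem_filter, Finset.mem_univ, true_and] at hσ
        obtain ⟨hsupp, hnfix⟩ := hσ
        have haa : σ a ≠ a := Perm.mem_support.mp (by rw [hsupp]; exact ha)
        have hp : σ⁻¹ a ≠ a := by
          intro h
          apply haa
          have h2 := congrArg σ h
          rw [Perm.apply_inv_self] at h2
          exact h2.symm
        have hσp : σ (σ⁻¹ a) = a := Perm.apply_inv_self σ a
        have hn : σ a ≠ σ⁻¹ a := by
          intro h
          apply hnfix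
          rw [h]
          exact hσp
        have hpS : σ⁻¹ a ∈ S := by
          rw [← hsupp]
          exact Perm.mem_support.mpr (by rw [hσp]; exact Ne.symm hp)
        simp only [Finset.mem_product, Finset.mem_filter, Finset.mem_univ, true_and]
        exact ⟨support_mul_swap hp hsupp hσp hn, Finset.mem_erase.mpr ⟨hp, hpS⟩⟩
      · rintro ⟨τ, p⟩ hq
        simp only [Finset.mem_product, Finset.mem_filter, Finset.mem_univ, true_and] at hq
        obtain ⟨hτ, hp⟩ := hq
        have hpa : p ≠ a := (Finset.mem_erase.mp hp).1
        have hτa : τ a = a := fix_of_support hτ (by simp)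
        have hpsupp : p ∈ τ.support := by rw [hτ]; exact hp
        have hτp : τ p ∈ S.erase a := by
          rw [← hτ]; exact Perm.apply_mem_support.mpr hpsupp
        have hτpa : τ p ≠ a := (Finset.mem_erase.mp hτp).1
        have hτpp : τ p ≠ p := Perm.mem_support.mp hpsupp
        have hσa : (τ * swap p a) a = τ p := by
          simp [Perm.mul_apply, swap_apply_right]
        have hσn : (τ * swap p a) (τ p) = τ (τ p) := by
          simp [Perm.mul_apply, swap_apply_of_ne_of_ne hτpp hτpa]
        have hττp : τ (τ p) ∈ S.erase a := by
          rw [← hτ]; exact Perm.apply_mem_support.mpr (hτ ▸ hτp)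
        simp only [Finset.mem_filter, Finset.mem_univ, true_and]
        refine ⟨support_mul_swap' ha hp hτ, ?_⟩
        rw [hσa, hσn]
        exact (Finset.mem_erase.mp hττp).1
      · intro σ hσ
        simp only
        rw [mul_assoc, swap_mul_self, mul_one]
      · rintro ⟨τ, p⟩ hq
        simp only [Finset.mem_product, Finset.mem_filter, Finset.mem_univ, true_and] at hq
        obtain ⟨hτ, hp⟩ := hq
        have hτa : τ a = a := fix_of_support hτ (by simp)
        have hσp : (τ * swap p a) p = a := by
          simp [Perm.mul_apply, swap_apply_left, hτa]
        have hinv : (τ * swap p a)⁻¹ a = p :=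
          (τ * swap p a).injective (by rw [Perm.apply_inv_self, hσp])
        simp only [hinv]
        rw [mul_assoc, swap_mul_self, mul_one]
      · intro σ hσ
        simp only [Finset.mem_filter, Finset.mem_univ, true_and] at hσ
        obtain ⟨hsupp, hnfix⟩ := hσ
        have haa : σ a ≠ a := Perm.mem_support.mp (by rw [hsupp]; exact ha)
        have hp : σ⁻¹ a ≠ a := by
          intro h
          apply haa
          have h2 := congrArg σ h
          rw [Perm.apply_inv_self] at h2
          exact h2.symm
        have hσp : σ (σ⁻¹ a) = a := Perm.apply_inv_self σ a
        have hn : σ a ≠ σ⁻¹ a := by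
          intro h
          apply hnfix
          rw [h]
          exact hσp
        have hpS : σ⁻¹ a ∈ S := by
          rw [← hsupp]
          exact Perm.mem_support.mpr (by rw [hσp]; exact Ne.symm hp)
        have hpmem : σ⁻¹ a ∈ S.erase a := Finset.mem_erase.mpr ⟨hp, hpS⟩
        -- τ values
        have hτp : (σ * swap (σ⁻¹ a) a) (σ⁻¹ a) = σ a := by
          simp [Perm.mul_apply, swap_apply_left]
        have hτeq : ∀ i ∈ (S.erase a).erase (σ⁻¹ a),
            (σ * swap (σ⁻¹ a) a) i = σ i := by
          intro i hi
          have h1 := Finset.mem_erase.mp hi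
          have h2 := Finset.mem_erase.mp h1.2
          rw [Perm.mul_apply, swap_apply_of_ne_of_ne h1.1 h2.1]
        -- sign
        have hs : ((Perm.sign (σ * swap (σ⁻¹ a) a) : ℤ) : ℂ)
            = -((Perm.sign σ : ℤ) : ℂ) := by
          rw [Perm.sign_mul, Perm.sign_swap hp]
          push_cast
          ring
        -- product decomposition
        have e1 : ∏ i ∈ S, (x i - x (σ i))⁻¹
            = (x a - x (σ a))⁻¹ * ((x (σ⁻¹ a) - x a)⁻¹ *
              ∏ i ∈ (S.erase a).erase (σ⁻¹ a), (x i - x (σ i))⁻¹) := by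
          rw [← Finset.mul_prod_erase S (fun i => (x i - x (σ i))⁻¹) ha,
              ← Finset.mul_prod_erase (S.erase a) (fun i => (x i - x (σ i))⁻¹) hpmem,
              hσp]
        have e3 : ∏ i ∈ S.erase a, (x i - x ((σ * swap (σ⁻¹ a) a) i))⁻¹
            = (x (σ⁻¹ a) - x (σ a))⁻¹ *
              ∏ i ∈ (S.erase a).erase (σ⁻¹ a), (x i - x (σ i))⁻¹ := by
          rw [← Finset.mul_prod_erase (S.erase a)
              (fun i => (x i - x ((σ * swap (σ⁻¹ a) a) i))⁻¹) hpmem, hτp]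
          congr 1
          exact Finset.prod_congr rfl (fun i hi => by rw [hτeq i hi])
        -- nonvanishing
        have hu : x (σ⁻¹ a) - x a ≠ 0 := sub_ne_zero.mpr (fun h => hp (hx h))
        have hv : x a - x (σ a) ≠ 0 := sub_ne_zero.mpr (fun h => (Ne.symm haa) (hx h))
        have huv : (x (σ⁻¹ a) - x a) + (x a - x (σ a)) ≠ 0 := by
          rw [show (x (σ⁻¹ a) - x a) + (x a - x (σ a)) = x (σ⁻¹ a) - x (σ a) by ring]
          exact sub_ne_zero.mpr (fun h => (Ne.symm hn) (hx h))
        have hC := inv_mul_inv_eq hu hv huv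
        have hw : x (σ⁻¹ a) - x (σ a) = (x (σ⁻¹ a) - x a) + (x a - x (σ a)) := by ring
        simp only
        rw [e1, e3, hs, hτp, hw]
        linear_combination (((Perm.sign σ : ℤ) : ℂ) *
          ∏ i ∈ (S.erase a).erase (σ⁻¹ a), (x i - x (σ i))⁻¹) * hC
    rw [key, Finset.sum_product]
    apply Finset.sum_eq_zero
    intro τ hτmem
    simp only [Finset.mem_filter, Finset.mem_univ, true_and] at hτmem
    have hzero : ∑ p ∈ S.erase a, ((x p - x a)⁻¹ + (x a - x (τ p))⁻¹) = 0 := by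
      rw [Finset.sum_add_distrib]
      have h2 : ∑ p ∈ S.erase a, (x a - x (τ p))⁻¹
          = ∑ p ∈ S.erase a, (x a - x p)⁻¹ := by
        refine Perm.sum_comp τ (S.erase a) (fun q => (x a - x q)⁻¹) ?_
        intro i hi
        have : i ∈ τ.support := Perm.mem_support.mpr hi
        rw [hτmem] at this
        exact Finset.mem_coe.mpr this
      rw [h2, ← Finset.sum_add_distrib]
      apply Finset.sum_eq_zero
      intro p hp
      rw [show x a - x p = -(x p - x a) by ring, inv_neg]
      ring
    calc (∑ p ∈ S.erase a, ((Perm.sign τ : ℤ) : ℂ) *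
            -(((x p - x a)⁻¹ + (x a - x (τ p))⁻¹) *
              ∏ i ∈ S.erase a, (x i - x (τ i))⁻¹))
        = ∑ p ∈ S.erase a, (-(((Perm.sign τ : ℤ) : ℂ) *
            ∏ i ∈ S.erase a, (x i - x (τ i))⁻¹)) *
            ((x p - x a)⁻¹ + (x a - x (τ p))⁻¹) :=
          Finset.sum_congr rfl (fun p _ => by ring)
      _ = (-(((Perm.sign τ : ℤ) : ℂ) *
            ∏ i ∈ S.erase a, (x i - x (τ i))⁻¹)) *
            ∑ p ∈ S.erase a, ((x p - x a)⁻¹ + (x a - x (τ p))⁻¹) :=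
          (Finset.mul_sum _ _ _).symm
      _ = 0 := by rw [hzero, mul_zero]
  have hA : (∑ σ ∈ Finset.univ.filter
        (fun σ : Perm (Fin k) => σ.support = S ∧ σ (σ a) = a),
      ((Perm.sign σ : ℤ) : ℂ) * ∏ i ∈ S, (x i - x (σ i))⁻¹)
      = ∑ b ∈ S.erase a, ((x a - x b) ^ 2)⁻¹ * Pf x ((S.erase a).erase b) := by
    have key : (∑ σ ∈ Finset.univ.filter
          (fun σ : Perm (Fin k) => σ.support = S ∧ σ (σ a) = a),
        ((Perm.sign σ : ℤ) : ℂ) * ∏ i ∈ S, (x i - x (σ i))⁻¹)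
        = ∑ q ∈ (S.erase a).sigma (fun b => Finset.univ.filter
            (fun τ : Perm (Fin k) => τ.support = (S.erase a).erase b)),
          ((x a - x q.1) ^ 2)⁻¹ * (((Perm.sign q.2 : ℤ) : ℂ) *
            ∏ i ∈ (S.erase a).erase q.1, (x i - x (q.2 i))⁻¹) := by
      refine Finset.sum_nbij' (fun σ => ⟨σ a, swap a (σ a) * σ⟩)
        (fun q => swap a q.1 * q.2) ?_ ?_ ?_ ?_ ?_
      · intro σ hσ
        simp only [Finset.mem_filter, Finset.mem_univ, true_and] at hσ
        obtain ⟨hsupp, hfix⟩ := hσ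
        have haa : σ a ≠ a := Perm.mem_support.mp (by rw [hsupp]; exact ha)
        have hbS : σ a ∈ S := by
          rw [← hsupp]
          exact Perm.apply_mem_support.mpr (by rw [hsupp]; exact ha)
        simp only [Finset.mem_sigma, Finset.mem_filter, Finset.mem_univ, true_and]
        exact ⟨Finset.mem_erase.mpr ⟨haa, hbS⟩,
          support_swap_mul' (Ne.symm haa) hsupp rfl hfix⟩
      · rintro ⟨b, τ⟩ hq
        simp only [Finset.mem_sigma, Finset.mem_filter, Finset.mem_univ, true_and] at hq
        obtain ⟨hb, hτ⟩ := hq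
        have hab : a ≠ b := Ne.symm (Finset.mem_erase.mp hb).1
        have hbS : b ∈ S := Finset.mem_of_mem_erase hb
        have hτa : τ a = a := fix_of_support hτ (by simp)
        have hτb : τ b = b := fix_of_support hτ (by simp)
        have hsa : (swap a b * τ) a = b := by
          simp [Perm.mul_apply, hτa]
        have hsb : (swap a b * τ) b = a := by
          simp [Perm.mul_apply, hτb]
        simp only [Finset.mem_filter, Finset.mem_univ, true_and]
        exact ⟨support_swap_mul ha hbS hab hτ, by rw [hsa, hsb]⟩
      · intro σ hσ
        simp only
        rw [← mul_assoc, swap_mul_self, one_mul]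
      · rintro ⟨b, τ⟩ hq
        simp only [Finset.mem_sigma, Finset.mem_filter, Finset.mem_univ, true_and] at hq
        obtain ⟨hb, hτ⟩ := hq
        have hτa : τ a = a := fix_of_support hτ (by simp)
        have hsa : (swap a b * τ) a = b := by
          simp [Perm.mul_apply, hτa]
        simp only [hsa]
        rw [← mul_assoc, swap_mul_self, one_mul]
      · intro σ hσ
        simp only [Finset.mem_filter, Finset.mem_univ, true_and] at hσ
        obtain ⟨hsupp, hfix⟩ := hσ
        have haa : σ a ≠ a := Perm.mem_support.mp (by rw [hsupp]; exact ha)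
        have hbS : σ a ∈ S := by
          rw [← hsupp]
          exact Perm.apply_mem_support.mpr (by rw [hsupp]; exact ha)
        have hab : a ≠ σ a := Ne.symm haa
        have hb_in : σ a ∈ S.erase a := Finset.mem_erase.mpr ⟨haa, hbS⟩
        have hτeq : ∀ i ∈ (S.erase a).erase (σ a),
            (swap a (σ a) * σ) i = σ i := by
          intro i hi
          have h1 := Finset.mem_erase.mp hi
          have h2 := Finset.mem_erase.mp h1.2
          have g1 : σ i ≠ a := fun h => h1.1 (σ.injective (h.trans hfix.symm))
          have g2 : σ i ≠ σ a := fun h => h2.1 (σ.injective h)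
          simp [Perm.mul_apply, swap_apply_of_ne_of_ne g1 g2]
        have hs : ((Perm.sign (swap a (σ a) * σ) : ℤ) : ℂ)
            = -((Perm.sign σ : ℤ) : ℂ) := by
          rw [Perm.sign_mul, Perm.sign_swap hab]
          push_cast
          ring
        have e1 : ∏ i ∈ S, (x i - x (σ i))⁻¹
            = (x a - x (σ a))⁻¹ * ((x (σ a) - x a)⁻¹ *
              ∏ i ∈ (S.erase a).erase (σ a), (x i - x (σ i))⁻¹) := by
          rw [← Finset.mul_prod_erase S (fun i => (x i - x (σ i))⁻¹) ha,
              ← Finset.mul_prod_erase (S.erase a) (fun i => (x i - x (σ i))⁻¹) hb_in,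
              hfix]
        have e3 : ∏ i ∈ (S.erase a).erase (σ a),
            (x i - x ((swap a (σ a) * σ) i))⁻¹
            = ∏ i ∈ (S.erase a).erase (σ a), (x i - x (σ i))⁻¹ :=
          Finset.prod_congr rfl (fun i hi => by rw [hτeq i hi])
        simp only
        rw [e1, e3, hs, show x (σ a) - x a = -(x a - x (σ a)) by ring, inv_neg,
          pow_two, mul_inv]
        ring
    rw [key, Finset.sum_sigma]
    exact Finset.sum_congr rfl (fun b hb => by rw [Pf, Finset.mul_sum])
  rw [hA, hB, add_zero]


lemma Rstep (x : Fin k → ℂ) (S : Finset (Fin k))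
    (a : Fin k) (ha : a ∈ S) (hmin : ∀ c ∈ S, a ≤ c) :
    Rf x S = ∑ b ∈ S.erase a, ((x a - x b) ^ 2)⁻¹ * Rf x ((S.erase a).erase b) := by
  classical
  have key : Rf x S
      = ∑ q ∈ (S.erase a).sigma (fun b => Finset.univ.filter
          (fun τ : Perm (Fin k) => τ.support = (S.erase a).erase b ∧ τ * τ = 1)),
        ((x a - x q.1) ^ 2)⁻¹ * ∏ i ∈ ((S.erase a).erase q.1).filter
          (fun i => i < q.2 i), ((x i - x (q.2 i)) ^ 2)⁻¹ := by
    rw [Rf]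
    refine Finset.sum_nbij' (fun σ => ⟨σ a, swap a (σ a) * σ⟩)
      (fun q => swap a q.1 * q.2) ?_ ?_ ?_ ?_ ?_
    · intro σ hσ
      simp only [Finset.mem_filter, Finset.mem_univ, true_and] at hσ
      obtain ⟨hsupp, hinv⟩ := hσ
      have hfix : σ (σ a) = a := by
        have h1 : (σ * σ) a = a := by rw [hinv]; rfl
        rwa [Perm.mul_apply] at h1
      have haa : σ a ≠ a := Perm.mem_support.mp (by rw [hsupp]; exact ha)
      have hbS : σ a ∈ S := by
        rw [← hsupp]
        exact Perm.apply_mem_support.mpr (by rw [hsupp]; exact ha)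
      have hab : a ≠ σ a := Ne.symm haa
      have hτa : (swap a (σ a) * σ) a = a := by
        simp [Perm.mul_apply, swap_apply_right]
      have hτb : (swap a (σ a) * σ) (σ a) = σ a := by
        simp [Perm.mul_apply, hfix, swap_apply_left]
      have hback : swap a (σ a) * (swap a (σ a) * σ) = σ := by
        rw [← mul_assoc, swap_mul_self, one_mul]
      simp only [Finset.mem_sigma, Finset.mem_filter, Finset.mem_univ, true_and]
      refine ⟨Finset.mem_erase.mpr ⟨haa, hbS⟩,
        support_swap_mul' hab hsupp rfl hfix, ?_⟩
      exact (invol_iff hab hτa hτb).mp (by rw [hback]; exact hinv)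
    · rintro ⟨b, τ⟩ hq
      simp only [Finset.mem_sigma, Finset.mem_filter, Finset.mem_univ, true_and] at hq
      obtain ⟨hb, hτ, hτinv⟩ := hq
      have hab : a ≠ b := Ne.symm (Finset.mem_erase.mp hb).1
      have hbS : b ∈ S := Finset.mem_of_mem_erase hb
      have hτa : τ a = a := fix_of_support hτ (by simp)
      have hτb : τ b = b := fix_of_support hτ (by simp)
      simp only [Finset.mem_filter, Finset.mem_univ, true_and]
      exact ⟨support_swap_mul ha hbS hab hτ, (invol_iff hab hτa hτb).mpr hτinv⟩
    · intro σ hσ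
      simp only
      rw [← mul_assoc, swap_mul_self, one_mul]
    · rintro ⟨b, τ⟩ hq
      simp only [Finset.mem_sigma, Finset.mem_filter, Finset.mem_univ, true_and] at hq
      obtain ⟨hb, hτ, hτinv⟩ := hq
      have hτa : τ a = a := fix_of_support hτ (by simp)
      have hsa : (swap a b * τ) a = b := by
        simp [Perm.mul_apply, hτa]
      simp only [hsa]
      rw [← mul_assoc, swap_mul_self, one_mul]
    · intro σ hσ
      simp only [Finset.mem_filter, Finset.mem_univ, true_and] at hσ
      obtain ⟨hsupp, hinv⟩ := hσ
      have hfix : σ (σ a) = a := by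
        have h1 : (σ * σ) a = a := by rw [hinv]; rfl
        rwa [Perm.mul_apply] at h1
      have haa : σ a ≠ a := Perm.mem_support.mp (by rw [hsupp]; exact ha)
      have hbS : σ a ∈ S := by
        rw [← hsupp]
        exact Perm.apply_mem_support.mpr (by rw [hsupp]; exact ha)
      have hab : a ≠ σ a := Ne.symm haa
      have halt : a < σ a := lt_of_le_of_ne (hmin (σ a) hbS) hab
      have hτeq : ∀ i ∈ (S.erase a).erase (σ a),
          (swap a (σ a) * σ) i = σ i := by
        intro i hi
        have h1 := Finset.mem_erase.mp hi
        have h2 := Finset.mem_erase.mp h1.2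
        have g1 : σ i ≠ a := fun h => h1.1 (σ.injective (h.trans hfix.symm))
        have g2 : σ i ≠ σ a := fun h => h2.1 (σ.injective h)
        simp [Perm.mul_apply, swap_apply_of_ne_of_ne g1 g2]
      have hset : S.filter (fun i => i < σ i)
          = insert a (((S.erase a).erase (σ a)).filter
            (fun i => i < (swap a (σ a) * σ) i)) := by
        ext i
        simp only [Finset.mem_filter, Finset.mem_insert, Finset.mem_erase]
        by_cases hia : i = a
        · subst hia
          simp [ha, halt]
        by_cases hib : i = σ a
        · subst hib
          have hnl : ¬ σ a < a := not_lt.mpr (hmin (σ a) hbS)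
          simp [hfix, hnl, hia]
        · constructor
          · rintro ⟨hiS, hlt⟩
            have heq := hτeq i (Finset.mem_erase.mpr ⟨hib,
              Finset.mem_erase.mpr ⟨hia, hiS⟩⟩)
            exact Or.inr ⟨⟨hib, hia, hiS⟩, by rwa [heq]⟩
          · rintro (h | ⟨⟨h1, h2, h3⟩, hlt⟩)
            · exact absurd h hia
            · have heq := hτeq i (Finset.mem_erase.mpr ⟨h1,
                Finset.mem_erase.mpr ⟨h2, h3⟩⟩)
              exact ⟨h3, by rwa [heq] at hlt⟩
      have hnot : a ∉ ((S.erase a).erase (σ a)).filter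
          (fun i => i < (swap a (σ a) * σ) i) := by
        intro h; exact (Finset.mem_erase.mp (Finset.mem_erase.mp (Finset.mem_filter.mp h).1).2).1 rfl
      simp only
      rw [hset, Finset.prod_insert hnot]
      congr 1
      refine Finset.prod_congr rfl (fun i hi => ?_)
      rw [hτeq i (Finset.mem_filter.mp hi).1]
  rw [key, Finset.sum_sigma]
  exact Finset.sum_congr rfl (fun b hb => by rw [Rf, Finset.mul_sum])


lemma Pf_empty (x : Fin k → ℂ) : Pf x ∅ = 1 := by
  rw [Pf]
  have h : Finset.univ.filter (fun σ : Perm (Fin k) => σ.support = ∅) = {1} := by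
    ext σ
    simp [Perm.support_eq_empty_iff]
  rw [h]
  simp

lemma Rf_empty (x : Fin k → ℂ) : Rf x ∅ = 1 := by
  rw [Rf]
  have h : Finset.univ.filter
      (fun σ : Perm (Fin k) => σ.support = ∅ ∧ σ * σ = 1) = {1} := by
    ext σ
    simp only [Finset.mem_filter, Finset.mem_univ, true_and, Finset.mem_singleton,
      Perm.support_eq_empty_iff]
    constructor
    · rintro ⟨h1, -⟩; exact h1
    · rintro rfl; simp
  rw [h]
  simp

lemma Pf_eq_Rf (x : Fin k → ℂ) (hx : Function.Injective x) (S : Finset (Fin k)) :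
    Pf x S = Rf x S := by
  induction S using Finset.strongInduction with
  | _ S IH =>
    rcases S.eq_empty_or_nonempty with rfl | hS
    · rw [Pf_empty, Rf_empty]
    · have ha := S.min'_mem hS
      rw [Pstep x hx S (S.min' hS) ha,
        Rstep x S (S.min' hS) ha (fun c hc => S.min'_le c hc)]
      refine Finset.sum_congr rfl (fun b hb => ?_)
      rw [IH _ (Finset.ssubset_of_subset_of_ssubset (Finset.erase_subset _ _)
        (Finset.erase_ssubset ha))]

end Kenyon3

open Kenyon3 Equiv in
theorem det_inverse_difference_matrix_eq_sum_pairings'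
    {k : ℕ} (x : Fin k → ℂ)
    (hx : Function.Injective x) :
    Matrix.det (Matrix.of fun i j : Fin k =>
        if i = j then 0 else (x j - x i)⁻¹) =
      ∑ σ ∈ Finset.univ.filter (fun σ : Equiv.Perm (Fin k) =>
          σ.support = Finset.univ ∧ σ * σ = 1),
        ∏ i ∈ Finset.univ.filter (fun i : Fin k => i < σ i),
          ((x i - x (σ i)) ^ 2)⁻¹ := by
  classical
  have h1 : ∀ σ ∈ (Finset.univ : Finset (Perm (Fin k))),
      (Perm.sign σ • ∏ i, (Matrix.of fun i j : Fin k =>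
        if i = j then 0 else (x j - x i)⁻¹) (σ i) i) ≠ 0 →
      σ.support = Finset.univ := by
    intro σ _ hne
    rw [Finset.eq_univ_iff_forall]
    intro i
    rw [Perm.mem_support]
    intro hfix
    apply hne
    have hz : (Matrix.of fun i j : Fin k =>
        if i = j then 0 else (x j - x i)⁻¹) (σ i) i = 0 := by
      simp [Matrix.of_apply, hfix]
    have hp : (∏ j : Fin k, (Matrix.of fun i j : Fin k =>
        if i = j then 0 else (x j - x i)⁻¹) (σ j) j) = 0 :=
      Finset.prod_eq_zero (Finset.mem_univ i) hz
    rw [hp, smul_zero]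
  have e0 : Matrix.det (Matrix.of fun i j : Fin k =>
      if i = j then 0 else (x j - x i)⁻¹) = Pf x Finset.univ := by
    rw [Matrix.det_apply, Pf, ← Finset.sum_filter_of_ne h1]
    refine Finset.sum_congr rfl (fun σ hσ => ?_)
    have hsupp : σ.support = Finset.univ := (Finset.mem_filter.mp hσ).2
    have hne : ∀ i, σ i ≠ i := fun i =>
      Perm.mem_support.mp (by rw [hsupp]; exact Finset.mem_univ i)
    rw [Units.smul_def, zsmul_eq_mul]
    congr 1
    refine Finset.prod_congr rfl (fun i _ => ?_)
    simp [Matrix.of_apply, hne i]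
  rw [e0, Pf_eq_Rf x hx, Rf]


/-- Lemma 3 of Kenyon, "Dominos and the Gaussian free field": for `k` even and
`x₁, …, x_k` distinct, the `k × k` matrix `M` with `M i i = 0` and
`M i j = 1/(x j − x i)` for `i ≠ j` has determinant equal to the sum over all
perfect pairings of `{1, …, k}` of the product of `1/(x_a − x_b)²` over the
pairs `{a, b}` of the pairing. -/
theorem det_inverse_difference_matrix_eq_sum_pairings
    {k : ℕ} (hk : Even k) (hk0 : 0 < k) (x : Fin k → ℂ)
    (hx : Function.Injective x) :
    Matrix.det (Matrix.of fun i j : Fin k =>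
        if i = j then 0 else (x j - x i)⁻¹) =
      ∑ σ ∈ Finset.univ.filter (fun σ : Equiv.Perm (Fin k) => IsPerfectPairing σ),
        ∏ i ∈ Finset.univ.filter (fun i : Fin k => i < σ i),
          ((x i - x (σ i)) ^ 2)⁻¹ := by
  rw [det_inverse_difference_matrix_eq_sum_pairings' x hx]
  refine Finset.sum_congr ?_ (fun σ _ => rfl)
  apply Finset.ext; intro σ
  simp only [Finset.mem_filter, Finset.mem_univ, true_and]
  unfold IsPerfectPairing
  constructor
  · rintro ⟨hs, hi⟩
    refine ⟨fun i => ?_, fun i =>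
      Equiv.Perm.mem_support.mp (by rw [hs]; exact Finset.mem_univ i)⟩
    have : (σ * σ) i = i := by rw [hi]; rfl
    rwa [Equiv.Perm.mul_apply] at this
  · rintro ⟨h1, h2⟩
    refine ⟨Finset.eq_univ_iff_forall.mpr
      (fun i => Equiv.Perm.mem_support.mpr (h2 i)), ?_⟩
    ext i
    simp [Equiv.Perm.mul_apply, h1 i]
end

section
/- Let k be even and M(x_1,...,x_k) the k×k matrix with zero diagonal and entries 1/(x_j-x_i). Viewed as a rational function of x_1, det(M) has at worst a double pole at x_1=x_2, and the coefficient of 1/(x_1-x_2)^2 in its Laurent expansion at x_1=x_2 equals det(M_{12}), where M_{12} is obtained from M by deleting the first two rows and columns. -/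
namespace DetPoleAux

variable {n : ℕ}

def i0 {n : ℕ} : Fin (n + 2) := ⟨0, by omega⟩
def i1 {n : ℕ} : Fin (n + 2) := ⟨1, by omega⟩

/-- The matrix with row 0 and column 0 rescaled by `t - x i1`, with the
`(0,1)` and `(1,0)` entries replaced by their simplified values `-1` and `1`. -/
noncomputable def Nm (x : Fin (n + 2) → ℂ) (t : ℂ) : Matrix (Fin (n + 2)) (Fin (n + 2)) ℂ :=
  Matrix.of fun i j =>
    if i = j then 0
    else if i = i0 then (if j = i1 then -1 else (t - x i1) * (x j - t)⁻¹)
    else if j = i0 then (if i = i1 then 1 else (t - x i1) * (t - x i)⁻¹)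
    else (x j - x i)⁻¹

lemma det_Nm (x : Fin (n + 2) → ℂ) (t : ℂ) (ht : t ≠ x i1) :
    (Nm x t).det = (t - x i1) ^ 2 *
      (Matrix.of fun i j : Fin (n+2) =>
        if i = j then 0
        else (Function.update x i0 t j - Function.update x i0 t i)⁻¹).det := by
  set M := Matrix.of fun i j : Fin (n+2) =>
        if i = j then 0
        else (Function.update x i0 t j - Function.update x i0 t i)⁻¹ with hM
  set v : Fin (n+2) → ℂ := fun i => if i = i0 then t - x i1 else 1 with hv
  have hNe : Nm x t = Matrix.of fun i j =>
      v i * ((Matrix.of fun i j => v j * M i j) i j) := by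
    ext i j
    simp only [Nm, Matrix.of_apply, hv, hM]
    rcases eq_or_ne i j with rfl | hij
    · simp
    · rw [if_neg hij, if_neg hij]
      rcases eq_or_ne i i0 with rfl | hi0
      · have hj0 : j ≠ i0 := fun h => hij h.symm
        rw [if_pos rfl, if_pos rfl, if_neg hj0]
        have hupj : Function.update x i0 t j = x j := Function.update_of_ne hj0 _ _
        have hupi : Function.update x i0 t i0 = t := Function.update_self _ _ _
        rw [hupj, hupi]
        rcases eq_or_ne j i1 with rfl | hj1
        · rw [if_pos rfl]
          have : x i1 - t ≠ 0 := sub_ne_zero.mpr (fun h => ht h.symm)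
          field_simp
          ring
        · rw [if_neg hj1]; ring
      · rw [if_neg hi0, if_neg hi0]
        rcases eq_or_ne j i0 with rfl | hj0
        · rw [if_pos rfl, if_pos rfl]
          have hupj : Function.update x i0 t i0 = t := Function.update_self _ _ _
          have hupi : Function.update x i0 t i = x i := Function.update_of_ne hi0 _ _
          rw [hupj, hupi]
          rcases eq_or_ne i i1 with rfl | hi1
          · rw [if_pos rfl]
            have : t - x i1 ≠ 0 := sub_ne_zero.mpr ht
            field_simp
          · rw [if_neg hi1]; ring
        · rw [if_neg hj0, if_neg hj0]
          rw [Function.update_of_ne hj0, Function.update_of_ne hi0]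
          ring
  have hprod : (∏ i, v i) = t - x i1 := by
    rw [hv]
    rw [Finset.prod_ite_eq' Finset.univ i0 (fun _ => t - x i1)]
    simp
  rw [hNe, Matrix.det_mul_column, Matrix.det_mul_row, hprod]
  ring

end DetPoleAux
namespace DetPoleAux2
open DetPoleAux
variable {n : ℕ}

lemma entry_analytic (x : Fin (n + 2) → ℂ)
    (hx2 : ∀ j : Fin (n + 2), 2 ≤ (j : ℕ) → x j ≠ x DetPoleAux.i1) (i j : Fin (n + 2)) :
    AnalyticAt ℂ (fun t => DetPoleAux.Nm x t i j) (x DetPoleAux.i1) := by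
  have hge : ∀ m : Fin (n+2), m ≠ DetPoleAux.i0 → m ≠ DetPoleAux.i1 → 2 ≤ (m : ℕ) := by
    intro m h0 h1
    have : (m : ℕ) ≠ 0 := fun h => h0 (Fin.ext h)
    have : (m : ℕ) ≠ 1 := fun h => h1 (Fin.ext h)
    omega
  simp only [DetPoleAux.Nm, Matrix.of_apply]
  rcases eq_or_ne i j with rfl | hij
  · simp only [if_pos rfl]; exact analyticAt_const
  simp only [if_neg hij]
  rcases eq_or_ne i DetPoleAux.i0 with rfl | hi0
  · simp only [if_pos rfl]
    rcases eq_or_ne j DetPoleAux.i1 with rfl | hj1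
    · simp only [if_pos rfl]; exact analyticAt_const
    · simp only [if_neg hj1]
      have hj0 : j ≠ DetPoleAux.i0 := fun h => hij h.symm
      have hxj : x j - x DetPoleAux.i1 ≠ 0 :=
        sub_ne_zero.mpr (hx2 j (hge j hj0 hj1))
      exact ((analyticAt_id.sub analyticAt_const).mul
        ((analyticAt_const.sub analyticAt_id).inv (by simpa using hxj)))
  · simp only [if_neg hi0]
    rcases eq_or_ne j DetPoleAux.i0 with rfl | hj0
    · simp only [if_pos rfl]
      rcases eq_or_ne i DetPoleAux.i1 with rfl | hi1
      · simp only [if_pos rfl]; exact analyticAt_const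
      · simp only [if_neg hi1]
        have hxi : x DetPoleAux.i1 - x i ≠ 0 :=
          sub_ne_zero.mpr fun h => (hx2 i (hge i hi0 hi1)) h.symm
        exact ((analyticAt_id.sub analyticAt_const).mul
          ((analyticAt_id.sub analyticAt_const).inv (by simpa using hxi)))
    · simp only [if_neg hj0]; exact analyticAt_const

lemma det_Nm_analytic (x : Fin (n + 2) → ℂ)
    (hx2 : ∀ j : Fin (n + 2), 2 ≤ (j : ℕ) → x j ≠ x DetPoleAux.i1) :
    AnalyticAt ℂ (fun t => (DetPoleAux.Nm x t).det) (x DetPoleAux.i1) := by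
  have : (fun t => (DetPoleAux.Nm x t).det) = fun t =>
      ∑ σ : Equiv.Perm (Fin (n+2)),
        (Equiv.Perm.sign σ : ℂ) * ∏ i, DetPoleAux.Nm x t (σ i) i := by
    funext t
    rw [Matrix.det_apply]
    congr 1; funext σ
    simp [Units.smul_def, zsmul_eq_mul]
  rw [this]
  refine Finset.analyticAt_fun_sum _ fun σ _ => analyticAt_const.mul ?_
  exact Finset.analyticAt_fun_prod _ fun i _ => entry_analytic x hx2 (σ i) i

end DetPoleAux2
namespace DetPoleAux3
open DetPoleAux
variable {n : ℕ}

lemma det_Nm_value (x : Fin (n + 2) → ℂ) :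
    (Nm x (x i1)).det =
      (Matrix.of fun i j : Fin n =>
        if i = j then 0
        else (x ⟨(j : ℕ) + 2, by omega⟩ - x ⟨(i : ℕ) + 2, by omega⟩)⁻¹).det := by
  set A := Nm x (x i1) with hA
  have h10 : (i1 : Fin (n+2)) ≠ i0 := by simp [i0, i1, Fin.ext_iff]
  have h01 : (i0 : Fin (n+2)) ≠ i1 := by simp [i0, i1, Fin.ext_iff]
  have h00 : (0 : Fin (n + 2)) = i0 := by ext; simp [i0]
  have hcol : ∀ i : Fin (n + 2), A i i0 = if i = i1 then 1 else 0 := by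
    intro i
    rcases eq_or_ne i i1 with rfl | hi1
    · simp [hA, Nm, h10]
    · rcases eq_or_ne i i0 with rfl | hi0
      · simp [hA, Nm, h01, hi1]
      · simp [hA, Nm, hi0, hi1]
  have hrow : ∀ j : Fin (n + 2), A i0 j = if j = i1 then -1 else 0 := by
    intro j
    rcases eq_or_ne j i1 with rfl | hj1
    · simp [hA, Nm, h01]
    · rcases eq_or_ne j i0 with rfl | hj0
      · simp [hA, Nm, hj1]
      · simp [hA, Nm, fun h : (i0 : Fin (n+2)) = j => hj0 h.symm, hj1, h01]
  rw [Matrix.det_succ_column_zero]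
  rw [Finset.sum_eq_single i1 ?h1 ?h2]
  rotate_left
  · intro i _ hi
    rw [h00, hcol i, if_neg hi]
    ring
  · intro h; exact absurd (Finset.mem_univ i1) h
  rw [h00, hcol i1, if_pos rfl]
  set B := A.submatrix (Fin.succAbove i1) Fin.succ with hB
  have hs0 : (i1 : Fin (n+2)).succAbove (0 : Fin (n+1)) = i0 := by
    rw [Fin.succAbove_of_castSucc_lt]
    · ext; simp [i0]
    · simp [i1, Fin.lt_def]
  have hssucc : ∀ i : Fin n, (i1 : Fin (n+2)).succAbove i.succ = i.succ.succ := by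
    intro i
    rw [Fin.succAbove_of_le_castSucc]
    simp [i1, Fin.le_def]
  rw [Matrix.det_succ_row_zero]
  rw [Finset.sum_eq_single (0 : Fin (n + 1)) ?h3 ?h4]
  rotate_left
  · intro j _ hj
    have hz : B 0 j = 0 := by
      rw [hB, Matrix.submatrix_apply, hs0, hrow, if_neg]
      intro h
      apply hj
      have h2 : (j : ℕ) + 1 = 1 := by
        have := congrArg Fin.val h
        simpa [i1, Fin.val_succ] using this
      ext
      simp only [Fin.val_zero]
      omega
    rw [hz]; ring
  · intro h; exact absurd (Finset.mem_univ _) h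
  have hB0 : B 0 0 = -1 := by
    rw [hB, Matrix.submatrix_apply, hs0, hrow, if_pos]
    ext; simp [i1]
  rw [hB0]
  have hAss : ∀ i j : Fin n, A i.succ.succ j.succ.succ =
      if i = j then 0 else (x j.succ.succ - x i.succ.succ)⁻¹ := by
    intro i j
    have hi0 : i.succ.succ ≠ (i0 : Fin (n+2)) := by simp [i0, Fin.ext_iff]
    have hi1 : i.succ.succ ≠ (i1 : Fin (n+2)) := by simp [i1, Fin.ext_iff]
    have hj0 : j.succ.succ ≠ (i0 : Fin (n+2)) := by simp [i0, Fin.ext_iff]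
    rcases eq_or_ne i j with rfl | h
    · simp [hA, Nm]
    · have h2 : i.succ.succ ≠ j.succ.succ := by
        simpa [Fin.succ_inj] using h
      simp [hA, Nm, h2, hi0, hi1, hj0, h]
  have hC : B.submatrix Fin.succ ((0 : Fin (n+1)).succAbove) =
      Matrix.of fun i j : Fin n =>
        if i = j then 0
        else (x ⟨(j : ℕ) + 2, by omega⟩ - x ⟨(i : ℕ) + 2, by omega⟩)⁻¹ := by
    ext i j
    have ei : (⟨(i : ℕ) + 2, by omega⟩ : Fin (n+2)) = i.succ.succ := by
      ext; simp
    have ej : (⟨(j : ℕ) + 2, by omega⟩ : Fin (n+2)) = j.succ.succ := by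
      ext; simp
    rw [Matrix.submatrix_apply, Fin.succAbove_zero, hB, Matrix.submatrix_apply, hssucc, hAss,
      Matrix.of_apply, ei, ej]
  rw [hC]
  simp [i1]

end DetPoleAux3
open DetPoleAux DetPoleAux2 DetPoleAux3


open DetPoleAux DetPoleAux2 DetPoleAux3


open Finset

/-- For `k` even, view the determinant of the `k × k` matrix `M(x₁,…,x_k)` with
zero diagonal and entries `1/(x j − x i)` as a function of `x₁` (with
`x₂, …, x_k` fixed and distinct).  Then it has at worst a double pole at
`x₁ = x₂`: there are a constant `c` (the simple-pole coefficient) and a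
function `r` continuous at `x₂` (the regular part) such that for every `t`
distinct from `x₂, …, x_k`,
`det M(t, x₂, …, x_k) = det M₁₂ / (t − x₂)² + c / (t − x₂) + r t`,
where `M₁₂ = M(x₃,…,x_k)` is obtained by deleting the first two rows and
columns. -/
theorem det_inverse_difference_matrix_double_pole
    {k : ℕ} (hk : Even k) (hk2 : 2 ≤ k) (x : Fin k → ℂ)
    (hx : ∀ i j : Fin k, i ≠ j → 1 ≤ (i : ℕ) → 1 ≤ (j : ℕ) → x i ≠ x j) :
    ∃ c : ℂ, ∃ r : ℂ → ℂ,
      ContinuousAt r (x ⟨1, by omega⟩) ∧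
      ∀ t : ℂ, (∀ j : Fin k, 1 ≤ (j : ℕ) → t ≠ x j) →
        Matrix.det (Matrix.of fun i j : Fin k =>
            if i = j then 0 else (Function.update x ⟨0, by omega⟩ t j - Function.update x ⟨0, by omega⟩ t i)⁻¹) =
          Matrix.det (Matrix.of fun i j : Fin (k - 2) =>
              if i = j then 0 else
                (x ⟨j + 2, by omega⟩ - x ⟨i + 2, by omega⟩)⁻¹) /
              (t - x ⟨1, by omega⟩) ^ 2
            + c / (t - x ⟨1, by omega⟩) + r t := by
  obtain ⟨n, rfl⟩ : ∃ n, k = n + 2 := ⟨k - 2, by omega⟩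
  have hx2 : ∀ j : Fin (n + 2), 2 ≤ (j : ℕ) → x j ≠ x i1 := by
    intro j hj
    refine hx j i1 (fun h => by simp [h, i1] at hj) (by omega) (by simp [i1])
  have hA : AnalyticAt ℂ (fun t => (Nm x t).det) (x i1) := det_Nm_analytic x hx2
  obtain ⟨p, hp⟩ := hA
  have h1 := hp.has_fpower_series_dslope_fslope
  have h2 := h1.has_fpower_series_dslope_fslope
  have main : ∀ t : ℂ, t ≠ x i1 →
      (Matrix.of fun i j : Fin (n + 2) =>
        if i = j then 0
        else (Function.update x i0 t j - Function.update x i0 t i)⁻¹).det =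
      (Matrix.of fun i j : Fin n =>
        if i = j then 0
        else (x ⟨(j : ℕ) + 2, by omega⟩ - x ⟨(i : ℕ) + 2, by omega⟩)⁻¹).det /
          (t - x i1) ^ 2
        + dslope (fun t => (Nm x t).det) (x i1) (x i1) / (t - x i1)
        + dslope (dslope (fun t => (Nm x t).det) (x i1)) (x i1) t := by
    intro t ht2
    have hs : t - x i1 ≠ 0 := sub_ne_zero.mpr ht2
    have key := det_Nm x t ht2
    have hD := det_Nm_value x
    rw [← hD, dslope_of_ne _ ht2, slope_def_field, dslope_of_ne _ ht2, slope_def_field]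
    rw [key]
    field_simp
    ring
  exact ⟨dslope (fun t => (Nm x t).det) (x i1) (x i1),
    dslope (dslope (fun t => (Nm x t).det) (x i1)) (x i1),
    h2.analyticAt.continuousAt,
    fun t ht => main t (ht ⟨1, by omega⟩ le_rfl)⟩
end
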